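/- Let A ∈ B(E,F) have generalized inverse A⁺ and let T ∈ B(E,F) with ‖T−A‖ < ‖A⁺‖⁻¹ and R(T) ∩ N(A⁺) = {0}. Then dim N(T) = dim N(A) and codim R(T) = codim R(A) (T and A belong to the same class among F_k, Φ_{m,n}, Φ_{m,∞}, Φ_{∞,n}). -/

import Mathlib

open ContinuousLinearMap

private lemma idem_isCompl_aux {M : Type*} [NormedAddCommGroup M] [NormedSpace ℝ M]
    (p : M →L[ℝ] M) (h : ∀ x, p (p x) = p x) :
    IsCompl (LinearMap.ker (p : M →ₗ[ℝ] M)) (LinearMap.range (p : M →ₗ[ℝ] M)) := by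
  constructor
  · rw [disjoint_iff_inf_le]
    rintro x ⟨hk, y, rfl⟩
    have hk' : p (p y) = 0 := hk
    rw [h y] at hk'
    simp [hk']
  · rw [codisjoint_iff_le_sup]
    intro x _
    have hm1 : x - p x ∈ LinearMap.ker (p : M →ₗ[ℝ] M) := by
      simp [LinearMap.mem_ker, map_sub, h]
    have hm2 : p x ∈ LinearMap.range (p : M →ₗ[ℝ] M) := ⟨x, rfl⟩
    have hx : x = (x - p x) + p x := by abel
    rw [hx]
    exact Submodule.add_mem_sup hm1 hm2

theorem stmt_9 {E F : Type*} [NormedAddCommGroup E] [NormedSpace ℝ E] [CompleteSpace E]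
    [NormedAddCommGroup F] [NormedSpace ℝ F] [CompleteSpace F]
    (A T : E →L[ℝ] F) (Ap : F →L[ℝ] E)
    (h1 : A ∘L Ap ∘L A = A) (h2 : Ap ∘L A ∘L Ap = Ap)
    (hT : ‖T - A‖ < ‖Ap‖⁻¹)
    (hR : LinearMap.range (T : E →ₗ[ℝ] F) ⊓ LinearMap.ker (Ap : F →ₗ[ℝ] E) = ⊥) :
    Module.rank ℝ (LinearMap.ker (T : E →ₗ[ℝ] F)) = Module.rank ℝ (LinearMap.ker (A : E →ₗ[ℝ] F)) ∧
    Module.rank ℝ (F ⧸ LinearMap.range (T : E →ₗ[ℝ] F)) = Module.rank ℝ (F ⧸ LinearMap.range (A : E →ₗ[ℝ] F)) := by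
  -- pointwise versions of the generalized-inverse identities
  have h1' : ∀ x, A (Ap (A x)) = A x := by
    intro x
    have := ContinuousLinearMap.ext_iff.mp h1 x
    simpa using this
  have h2' : ∀ y, Ap (A (Ap y)) = Ap y := by
    intro y
    have := ContinuousLinearMap.ext_iff.mp h2 y
    simpa using this
  -- ‖Ap‖ > 0
  have hApnorm : (0:ℝ) < ‖Ap‖ := by
    rcases (norm_nonneg Ap).lt_or_eq with h | h
    · exact h
    · exfalso
      rw [← h] at hT
      simp only [inv_zero] at hT
      exact absurd hT (not_lt.mpr (norm_nonneg _))
  -- the perturbation C = (T - A) ∘ Ap has norm < 1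
  set C : F →L[ℝ] F := (T - A) ∘L Ap with hCdef
  have hCnorm : ‖C‖ < 1 := by
    calc ‖C‖ ≤ ‖T - A‖ * ‖Ap‖ := ContinuousLinearMap.opNorm_comp_le _ _
      _ < ‖Ap‖⁻¹ * ‖Ap‖ := mul_lt_mul_of_pos_right hT hApnorm
      _ = 1 := inv_mul_cancel₀ (ne_of_gt hApnorm)
  have hCnorm' : ‖-C‖ < 1 := by rwa [norm_neg]
  -- W = 1 + C is invertible; V is its inverse
  set u : (F →L[ℝ] F)ˣ := Units.oneSub (-C) hCnorm' with hu
  set V : F →L[ℝ] F := ↑u⁻¹ with hVdef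
  have hWval : (u : F →L[ℝ] F) = 1 + C := by
    rw [hu, Units.val_oneSub, sub_neg_eq_add]
  have hVW : ∀ y, V (y + (T (Ap y) - A (Ap y))) = y := by
    intro y
    have h := congrArg (fun (f : F →L[ℝ] F) => f y) u.inv_mul
    simp only [ContinuousLinearMap.mul_apply, hWval, ContinuousLinearMap.add_apply,
      ContinuousLinearMap.one_apply, hCdef, ContinuousLinearMap.comp_apply,
      ContinuousLinearMap.sub_apply] at h
    exact h
  have hWV : ∀ y, V y + (T (Ap (V y)) - A (Ap (V y))) = y := by
    intro y
    have h := congrArg (fun (f : F →L[ℝ] F) => f y) u.mul_inv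
    simp only [ContinuousLinearMap.mul_apply, hWval, ContinuousLinearMap.add_apply,
      ContinuousLinearMap.one_apply, hCdef, ContinuousLinearMap.comp_apply,
      ContinuousLinearMap.sub_apply] at h
    exact h
  -- V fixes ker Ap pointwise
  have hVfix : ∀ z, Ap z = 0 → V z = z := by
    intro z hz
    have h := hVW z
    rw [hz] at h
    simpa using h
  -- The auxiliary idempotent R' on F
  set R' : F →L[ℝ] F := V - A ∘L (Ap ∘L V) with hRdef
  have hR'apply : ∀ y, R' y = V y - A (Ap (V y)) := by
    intro y; simp [hRdef]
  have hTApV : ∀ y, T (Ap (V y)) = y - R' y := by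
    intro y
    rw [hR'apply, eq_sub_iff_add_eq]
    conv_rhs => rw [← hWV y]
    abel
  have hApR : ∀ y, Ap (R' y) = 0 := by
    intro y
    rw [hR'apply]
    simp [map_sub, h2']
  have hRidem : ∀ y, R' (R' y) = R' y := by
    intro y
    have hfix := hVfix (R' y) (hApR y)
    rw [hR'apply (R' y), hfix, hApR y]
    simp
  have hRfix : ∀ z, Ap z = 0 → R' z = z := by
    intro z hz
    rw [hR'apply, hVfix z hz, hz]
    simp
  -- range R' = ker Ap
  have hRrange : LinearMap.range (R' : F →ₗ[ℝ] F) = LinearMap.ker (Ap : F →ₗ[ℝ] E) := by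
    apply le_antisymm
    · rintro _ ⟨y, rfl⟩
      exact hApR y
    · intro z hz
      exact ⟨z, hRfix z hz⟩
  -- R' vanishes on range T
  have hRT : ∀ x, R' (T x) = 0 := by
    intro x
    have hmem : R' (T x) ∈ LinearMap.range (T : E →ₗ[ℝ] F) ⊓ LinearMap.ker (Ap : F →ₗ[ℝ] E) := by
      constructor
      · refine ⟨x - Ap (V (T x)), ?_⟩
        show T (x - Ap (V (T x))) = R' (T x)
        rw [map_sub, hTApV (T x)]
        abel
      · exact hApR (T x)
    rw [hR] at hmem
    simpa using hmem
  -- ker R' = range T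
  have hRker : LinearMap.ker (R' : F →ₗ[ℝ] F) = LinearMap.range (T : E →ₗ[ℝ] F) := by
    apply le_antisymm
    · intro y hy
      have hy' : R' y = 0 := hy
      refine ⟨Ap (V y), ?_⟩
      show T (Ap (V y)) = y
      rw [hTApV y, hy', sub_zero]
    · rintro _ ⟨x, rfl⟩
      exact hRT x
  -- F = range T ⊕ ker Ap
  have hcT : IsCompl (LinearMap.range (T : E →ₗ[ℝ] F)) (LinearMap.ker (Ap : F →ₗ[ℝ] E)) := by
    have := idem_isCompl_aux R' hRidem
    rwa [hRker, hRrange] at this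
  -- F = range A ⊕ ker Ap via the idempotent Q = A ∘ Ap
  have hQidem : ∀ y, (A ∘L Ap) ((A ∘L Ap) y) = (A ∘L Ap) y := by
    intro y; simp [h1']
  have hQker : LinearMap.ker (A ∘L Ap : F →ₗ[ℝ] F) = LinearMap.ker (Ap : F →ₗ[ℝ] E) := by
    apply le_antisymm
    · intro y hy
      have hy' : A (Ap y) = 0 := hy
      have : Ap (A (Ap y)) = 0 := by rw [hy']; simp
      rwa [h2' y] at this
    · intro y hy
      have hy' : Ap y = 0 := hy
      show A (Ap y) = 0
      rw [hy']; simp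
  have hQrange : LinearMap.range (A ∘L Ap : F →ₗ[ℝ] F) = LinearMap.range (A : E →ₗ[ℝ] F) := by
    apply le_antisymm
    · rintro _ ⟨y, rfl⟩
      exact ⟨Ap y, rfl⟩
    · rintro _ ⟨x, rfl⟩
      exact ⟨A x, h1' x⟩
  have hcA : IsCompl (LinearMap.range (A : E →ₗ[ℝ] F)) (LinearMap.ker (Ap : F →ₗ[ℝ] E)) := by
    have := idem_isCompl_aux (A ∘L Ap) hQidem
    rw [hQker, hQrange] at this
    exact this.symm
  -- E = ker T ⊕ range Ap via the idempotent P' = Ap ∘ V ∘ T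
  set P' : E →L[ℝ] E := Ap ∘L (V ∘L T) with hPdef
  have hP'apply : ∀ x, P' x = Ap (V (T x)) := by intro x; simp [hPdef]
  have hP'idem : ∀ x, P' (P' x) = P' x := by
    intro x
    rw [hP'apply (P' x), hP'apply x]
    have hTP : T (Ap (V (T x))) = T x := by
      rw [hTApV (T x), hRT x, sub_zero]
    rw [hTP]
  have hP'ker : LinearMap.ker (P' : E →ₗ[ℝ] E) = LinearMap.ker (T : E →ₗ[ℝ] F) := by
    apply le_antisymm
    · intro x hx
      have hx' : P' x = 0 := hx
      rw [hP'apply] at hx'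
      have hTP : T (Ap (V (T x))) = T x := by
        rw [hTApV (T x), hRT x, sub_zero]
      show T x = 0
      rw [← hTP, hx']
      simp
    · intro x hx
      have hx' : T x = 0 := hx
      show P' x = 0
      rw [hP'apply, hx']
      simp
  have hP'range : LinearMap.range (P' : E →ₗ[ℝ] E) = LinearMap.range (Ap : F →ₗ[ℝ] E) := by
    apply le_antisymm
    · rintro _ ⟨x, rfl⟩
      exact ⟨V (T x), (hP'apply x).symm⟩
    · rintro _ ⟨y, rfl⟩
      refine ⟨Ap y, ?_⟩
      show P' (Ap y) = Ap y
      rw [hP'apply]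
      have hz : Ap (y - A (Ap y)) = 0 := by simp [map_sub, h2']
      have hTAp : T (Ap y) = (y + (T (Ap y) - A (Ap y))) - (y - A (Ap y)) := by abel
      rw [hTAp, map_sub, hVW y, hVfix _ hz]
      have : y - (y - A (Ap y)) = A (Ap y) := by abel
      rw [this, h2' y]
  have hkT : IsCompl (LinearMap.range (Ap : F →ₗ[ℝ] E)) (LinearMap.ker (T : E →ₗ[ℝ] F)) := by
    have := idem_isCompl_aux P' hP'idem
    rw [hP'ker, hP'range] at this
    exact this.symm
  -- E = ker A ⊕ range Ap via the idempotent P = Ap ∘ A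
  have hPidem : ∀ x, (Ap ∘L A) ((Ap ∘L A) x) = (Ap ∘L A) x := by
    intro x; simp [h2']
  have hPker : LinearMap.ker (Ap ∘L A : E →ₗ[ℝ] E) = LinearMap.ker (A : E →ₗ[ℝ] F) := by
    apply le_antisymm
    · intro x hx
      have hx' : Ap (A x) = 0 := hx
      have : A (Ap (A x)) = 0 := by rw [hx']; simp
      rwa [h1' x] at this
    · intro x hx
      have hx' : A x = 0 := hx
      show Ap (A x) = 0
      rw [hx']; simp
  have hPrange : LinearMap.range (Ap ∘L A : E →ₗ[ℝ] E) = LinearMap.range (Ap : F →ₗ[ℝ] E) := by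
    apply le_antisymm
    · rintro _ ⟨x, rfl⟩
      exact ⟨A x, rfl⟩
    · rintro _ ⟨y, rfl⟩
      exact ⟨Ap y, h2' y⟩
  have hkA : IsCompl (LinearMap.range (Ap : F →ₗ[ℝ] E)) (LinearMap.ker (A : E →ₗ[ℝ] F)) := by
    have := idem_isCompl_aux (Ap ∘L A) hPidem
    rw [hPker, hPrange] at this
    exact this.symm
  -- conclude
  constructor
  · have e1 := Submodule.quotientEquivOfIsCompl _ _ hkT
    have e2 := Submodule.quotientEquivOfIsCompl _ _ hkA
    rw [← e1.rank_eq, ← e2.rank_eq]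
  · have e1 := Submodule.quotientEquivOfIsCompl _ _ hcT
    have e2 := Submodule.quotientEquivOfIsCompl _ _ hcA
    rw [e1.rank_eq, e2.rank_eq]
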